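/- For the elementary abelian group G = C_2^d (d ≥ 1), the expected number of uniformly random elements needed to generate G satisfies e(G) = d + ∑_{i=1}^{d} 1/(2^i - 1), and consequently d ≤ e(G) ≤ d + 2. -/

import Mathlib

open Subgroup

noncomputable def genProb (G : Type*) [Group G] (Y : Set G) (n : ℕ) : ℝ :=
  (Nat.card {v : Fin n → G // Subgroup.closure (Y ∪ Set.range v) = ⊤} : ℝ) /
    (Nat.card G : ℝ) ^ n

noncomputable def eTime (G : Type*) [Group G] (Y : Set G) : ℝ :=
  ∑' n : ℕ, (1 - genProb G Y n)

section aux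

open Finset Module Matrix Filter Topology

/-! ### Bridge from subgroup closure to linear span -/

lemma closure_eq_top_iff_span' {A : Type*} [AddCommGroup A] [Module (ZMod 2) A]
    (S : Set (Multiplicative A)) :
    Subgroup.closure S = ⊤ ↔
      Submodule.span (ZMod 2) (⇑Multiplicative.toAdd '' S) = ⊤ := by
  set e : Subgroup (Multiplicative A) ≃o Submodule (ZMod 2) A :=
    (Subgroup.toAddSubgroup').trans (AddSubgroup.toZModSubmodule 2) with he
  have key : e (Subgroup.closure S)
      = Submodule.span (ZMod 2) (⇑Multiplicative.toAdd '' S) := by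
    apply le_antisymm
    · have h1 : Subgroup.closure S ≤
          e.symm (Submodule.span (ZMod 2) (⇑Multiplicative.toAdd '' S)) := by
        rw [Subgroup.closure_le]
        intro x hx
        have : Multiplicative.toAdd x ∈
            Submodule.span (ZMod 2) (⇑Multiplicative.toAdd '' S) :=
          Submodule.subset_span ⟨x, hx, rfl⟩
        exact this
      exact (e.le_symm_apply).mp h1
    · rw [Submodule.span_le]
      rintro _ ⟨x, hx, rfl⟩
      have : x ∈ Subgroup.closure S := Subgroup.subset_closure hx
      exact this
  rw [← key]
  constructor
  · intro h; rw [h]; exact e.map_top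
  · intro h; exact e.injective (by rw [h, e.map_top])

/-! ### Counting spanning tuples -/

lemma span_top_iff_li' {n d : ℕ} (w : Fin n → Fin d → ZMod 2) :
    Submodule.span (ZMod 2) (Set.range w) = ⊤ ↔
      LinearIndependent (ZMod 2) (Function.swap w) := by
  classical
  let M : Matrix (Fin n) (Fin d) (ZMod 2) := Matrix.of w
  have hM : M.rank = finrank (ZMod 2) (Submodule.span (ZMod 2) (Set.range w)) :=
    Matrix.rank_eq_finrank_span_row M
  have hMT : Mᵀ.rank
      = finrank (ZMod 2) (Submodule.span (ZMod 2) (Set.range (Function.swap w))) :=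
    Matrix.rank_eq_finrank_span_row Mᵀ
  have hTT : Mᵀ.rank = M.rank := Matrix.rank_transpose M
  have hli : LinearIndependent (ZMod 2) (Function.swap w) ↔
      Fintype.card (Fin d) = (Set.range (Function.swap w)).finrank (ZMod 2) :=
    linearIndependent_iff_card_eq_finrank_span
  rw [hli]
  unfold Set.finrank
  rw [← hMT, hTT, hM, Fintype.card_fin]
  constructor
  · intro h; rw [h, finrank_top, finrank_fintype_fun_eq_card, Fintype.card_fin]
  · intro h
    apply Submodule.eq_top_of_finrank_eq
    rw [← h, finrank_fintype_fun_eq_card, Fintype.card_fin]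

lemma card_spanning' (n d : ℕ) :
    (Nat.card {w : Fin n → Fin d → ZMod 2 //
        Submodule.span (ZMod 2) (Set.range w) = ⊤} : ℝ)
      = ∏ i ∈ range d, ((2:ℝ)^n - 2^i) := by
  classical
  rcases le_or_gt d n with hdn | hnd
  · have e1 : {w : Fin n → Fin d → ZMod 2 //
          Submodule.span (ZMod 2) (Set.range w) = ⊤}
        ≃ {s : Fin d → Fin n → ZMod 2 // LinearIndependent (ZMod 2) s} :=
      Equiv.subtypeEquiv ⟨Function.swap, Function.swap, fun _ => rfl, fun _ => rfl⟩
        (fun w => span_top_iff_li' w)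
    rw [Nat.card_congr e1, card_linearIndependent (by
      simpa [finrank_fintype_fun_eq_card] using hdn)]
    rw [Nat.cast_prod]
    rw [← Fin.prod_univ_eq_prod_range (fun i => ((2:ℝ)^n - 2^i)) d]
    refine Finset.prod_congr rfl fun i _ => ?_
    have h2 : (2:ℕ)^(i:ℕ) ≤ 2^n :=
      Nat.pow_le_pow_right (by norm_num) ((le_of_lt i.is_lt).trans hdn)
    rw [ZMod.card, finrank_fintype_fun_eq_card, Fintype.card_fin, Nat.cast_sub h2]
    push_cast
    ring
  · have : IsEmpty {w : Fin n → Fin d → ZMod 2 //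
        Submodule.span (ZMod 2) (Set.range w) = ⊤} := by
      constructor
      rintro ⟨w, hw⟩
      have := (span_top_iff_li' w).mp hw
      have hc := this.fintype_card_le_finrank
      rw [Fintype.card_fin, finrank_fintype_fun_eq_card, Fintype.card_fin] at hc
      omega
    rw [Nat.card_of_isEmpty, Nat.cast_zero, eq_comm]
    exact Finset.prod_eq_zero (Finset.mem_range.2 hnd) (by simp)

/-! ### The probability function -/

noncomputable def Qfun (d n : ℕ) : ℝ := ∏ j ∈ range d, (1 - 2^j / 2^n)

lemma Qfun_of_lt {d n : ℕ} (h : n < d) : Qfun d n = 0 :=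
  Finset.prod_eq_zero (Finset.mem_range.2 h) (by field_simp; ring)

lemma Qfun_nonneg (d n : ℕ) : 0 ≤ Qfun d n := by
  rcases lt_or_ge n d with h | h
  · rw [Qfun_of_lt h]
  · refine Finset.prod_nonneg fun j hj => ?_
    have : (2:ℝ)^j ≤ 2^n :=
      pow_le_pow_right₀ one_le_two ((Finset.mem_range.1 hj).le.trans h)
    have h2 : (0:ℝ) < 2^n := by positivity
    rw [sub_nonneg, div_le_one h2]
    exact this

lemma Qfun_succ (d n : ℕ) : Qfun (d+1) n = Qfun d n * (1 - 2^d / 2^n) :=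
  Finset.prod_range_succ _ d

lemma Qfun_shift (d n : ℕ) : Qfun (d+1) (n+1) = Qfun d n * (1 - 1 / 2^(n+1)) := by
  rw [Qfun, Finset.prod_range_succ']
  have h1 : ∀ j : ℕ, (1 - (2:ℝ)^(j+1) / 2^(n+1)) = 1 - 2^j / 2^n := by
    intro j
    rw [pow_succ, pow_succ, mul_div_mul_right _ _ (by norm_num : (2:ℝ) ≠ 0)]
  simp only [h1, pow_zero]
  rw [Qfun]

lemma Qfun_tendsto (d : ℕ) : Tendsto (fun n => Qfun d n) atTop (𝓝 1) := by
  have : Tendsto (fun n => ∏ j ∈ range d, (1 - 2^j / 2^n : ℝ)) atTop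
      (𝓝 (∏ j ∈ range d, (1 : ℝ))) := by
    refine tendsto_finset_prod _ fun j _ => ?_
    have h1 : Tendsto (fun n : ℕ => ((2:ℝ)^j / 2^n)) atTop (𝓝 0) := by
      have h2 : Tendsto (fun n : ℕ => ((1:ℝ)/2)^n) atTop (𝓝 0) :=
        tendsto_pow_atTop_nhds_zero_of_lt_one (by norm_num) (by norm_num)
      have : (fun n : ℕ => ((2:ℝ)^j / 2^n)) = fun n => (2:ℝ)^j * ((1:ℝ)/2)^n := by
        funext n
        rw [div_pow, one_pow, div_eq_mul_inv, one_div, ← div_eq_mul_inv]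
      rw [this]
      simpa using h2.const_mul ((2:ℝ)^j)
    simpa using (tendsto_const_nhds.sub h1)
  rw [Finset.prod_const_one] at this; exact this

lemma Qfun_hasSum (d : ℕ) :
    HasSum (fun n => Qfun d n * (2^d / 2^n)) (1 + 1/(2^(d+1) - 1)) := by
  have hpow : (1:ℝ) < 2^(d+1) := one_lt_pow₀ one_lt_two (Nat.succ_ne_zero d)
  set c : ℝ := (1 - 1/2^(d+1))⁻¹ with hc
  have hcne : (1:ℝ) - 1/2^(d+1) ≠ 0 := by
    have : (1:ℝ)/2^(d+1) < 1 := by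
      rw [div_lt_one (by positivity)]; exact hpow
    linarith
  have hkey : ∀ n, Qfun d n * (2^d / 2^n)
      = c * Qfun (d+1) (n+1) - c * Qfun (d+1) n := by
    intro n
    have h2n : ((2:ℝ)^n) ≠ 0 := by positivity
    have h2n1 : ((2:ℝ)^(n+1)) ≠ 0 := by positivity
    have h2d1 : ((2:ℝ)^(d+1)) ≠ 0 := by positivity
    have step1 : c * Qfun (d+1) (n+1) - c * Qfun (d+1) n
        = Qfun d n * (c * ((2:ℝ)^d/2^n - 1/2^(n+1))) := by
      rw [Qfun_shift, Qfun_succ]; ring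
    have step2 : c * ((2:ℝ)^d/2^n - 1/2^(n+1)) = 2^d/2^n := by
      rw [hc, inv_mul_eq_div, div_eq_iff hcne]
      field_simp
      ring
    rw [step1, step2]
  have hnn : ∀ n, 0 ≤ Qfun d n * (2^d / 2^n) := fun n => by
    have := Qfun_nonneg d n; positivity
  rw [hasSum_iff_tendsto_nat_of_nonneg hnn]
  have hps : ∀ N, ∑ n ∈ range N, Qfun d n * (2^d / 2^n)
      = c * Qfun (d+1) N - c * Qfun (d+1) 0 := by
    intro N
    rw [Finset.sum_congr rfl fun n _ => hkey n]
    exact Finset.sum_range_sub (fun n => c * Qfun (d+1) n) N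
  have hQ0 : Qfun (d+1) 0 = 0 := Qfun_of_lt (Nat.succ_pos d)
  have hlim : Tendsto (fun N => c * Qfun (d+1) N - c * Qfun (d+1) 0) atTop
      (𝓝 (c * 1 - c * Qfun (d+1) 0)) :=
    (((Qfun_tendsto (d+1)).const_mul c).sub tendsto_const_nhds)
  have hval : c * 1 - c * Qfun (d+1) 0 = 1 + 1/(2^(d+1) - 1) := by
    rw [hQ0, hc]
    have h1 : ((2:ℝ)^(d+1) - 1) ≠ 0 := by linarith
    field_simp
    ring
  rw [← hval]
  simpa only [← hps] using hlim

lemma E_eq (d : ℕ) : Summable (fun n => 1 - Qfun d n) ∧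
    ∑' n, (1 - Qfun d n) = d + ∑ i ∈ Finset.Icc 1 d, (1:ℝ)/(2^i - 1) := by
  induction d with
  | zero =>
    have : (fun n => 1 - Qfun 0 n) = fun _ => (0:ℝ) := by
      funext n; simp [Qfun]
    rw [this]
    refine ⟨summable_zero, by simp⟩
  | succ d ih =>
    have hterm : (fun n => 1 - Qfun (d+1) n)
        = fun n => (1 - Qfun d n) + Qfun d n * (2^d / 2^n) := by
      funext n; rw [Qfun_succ]; ring
    have hs2 := (Qfun_hasSum d).summable
    constructor
    · rw [hterm]; exact ih.1.add hs2
    · rw [hterm, Summable.tsum_add ih.1 hs2, ih.2, (Qfun_hasSum d).tsum_eq,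
        Finset.sum_Icc_succ_top (Nat.le_add_left 1 d)]
      push_cast
      ring

/-! ### The probability computation -/

lemma card_mult' (d : ℕ) :
    (Nat.card (Multiplicative (Fin d → ZMod 2)) : ℝ) = 2^d := by
  rw [Nat.card_congr Multiplicative.toAdd, Nat.card_pi]
  simp [Nat.card_zmod]

lemma genProb_eq_Qfun (d n : ℕ) :
    genProb (Multiplicative (Fin d → ZMod 2)) ∅ n = Qfun d n := by
  have e2 : {v : Fin n → Multiplicative (Fin d → ZMod 2) //
        Subgroup.closure (∅ ∪ Set.range v) = ⊤}
      ≃ {w : Fin n → (Fin d → ZMod 2) //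
        Submodule.span (ZMod 2) (Set.range w) = ⊤} := by
    refine Equiv.subtypeEquiv
      (Equiv.piCongrRight fun _ => Multiplicative.toAdd) (fun v => ?_)
    rw [Set.empty_union, closure_eq_top_iff_span']
    have h3 : ⇑Multiplicative.toAdd '' Set.range v
        = Set.range fun i => Multiplicative.toAdd (v i) := (Set.range_comp _ v).symm
    rw [h3]
    exact Iff.rfl
  rw [genProb, Nat.card_congr e2, card_spanning', card_mult', Qfun]
  have h2n : ((2:ℝ)^n) ≠ 0 := by positivity
  have hcg : ∀ j ∈ range d, (1 - (2:ℝ)^j/2^n) = ((2:ℝ)^n - 2^j)/2^n := by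
    intro j _
    field_simp
  rw [Finset.prod_congr rfl hcg, Finset.prod_div_distrib, Finset.prod_const,
    Finset.card_range]
  congr 1
  rw [← pow_mul, ← pow_mul, Nat.mul_comm]

end aux

/-- For `G = C₂^d` (`d ≥ 1`), `e(G) = d + ∑_{i=1}^d 1/(2^i - 1)`, hence
`d ≤ e(G) ≤ d + 2`. -/
theorem stmt12 (d : ℕ) (hd : 1 ≤ d) :
    eTime (Multiplicative (Fin d → ZMod 2)) ∅ =
        d + ∑ i ∈ Finset.Icc 1 d, (1 : ℝ) / (2 ^ i - 1) ∧
      (d : ℝ) ≤ eTime (Multiplicative (Fin d → ZMod 2)) ∅ ∧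
      eTime (Multiplicative (Fin d → ZMod 2)) ∅ ≤ d + 2 := by
  obtain ⟨hsum, heq⟩ := E_eq d
  have h1 : eTime (Multiplicative (Fin d → ZMod 2)) ∅
      = d + ∑ i ∈ Finset.Icc 1 d, (1 : ℝ) / (2 ^ i - 1) := by
    rw [eTime, tsum_congr (fun n => by rw [genProb_eq_Qfun d n]), heq]
  have hS0 : (0:ℝ) ≤ ∑ i ∈ Finset.Icc 1 d, (1 : ℝ) / (2 ^ i - 1) := by
    refine Finset.sum_nonneg fun i hi => ?_
    have h1i : 1 ≤ i := (Finset.mem_Icc.1 hi).1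
    have : (2:ℝ) ≤ 2^i := by
      calc (2:ℝ) = 2^1 := (pow_one 2).symm
      _ ≤ 2^i := pow_le_pow_right₀ one_le_two h1i
    have : (0:ℝ) ≤ 2^i - 1 := by linarith
    positivity
  have hS2 : ∑ i ∈ Finset.Icc 1 d, (1 : ℝ) / (2 ^ i - 1) ≤ 2 := by
    have hb : ∀ i ∈ Finset.Icc 1 d, (1:ℝ)/(2^i - 1) ≤ ((1:ℝ)/2)^(i-1) := by
      intro i hi
      have h1i : 1 ≤ i := (Finset.mem_Icc.1 hi).1
      have hp : (0:ℝ) < 2^(i-1) := by positivity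
      have hsplit : (2:ℝ)^i = 2^(i-1) * 2 := by
        rw [← pow_succ]
        congr 1
        omega
      have h1le : (1:ℝ) ≤ 2^(i-1) := one_le_pow₀ one_le_two
      have hle : (2:ℝ)^(i-1) ≤ 2^i - 1 := by rw [hsplit]; linarith
      calc (1:ℝ)/(2^i - 1) ≤ 1/2^(i-1) := by
            apply one_div_le_one_div_of_le hp hle
      _ = ((1:ℝ)/2)^(i-1) := by rw [div_pow, one_pow]
    calc ∑ i ∈ Finset.Icc 1 d, (1 : ℝ) / (2 ^ i - 1)
        ≤ ∑ i ∈ Finset.Icc 1 d, ((1:ℝ)/2)^(i-1) := Finset.sum_le_sum hb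
      _ = ∑ j ∈ Finset.range d, ((1:ℝ)/2)^j := by
          rw [← Finset.Ico_add_one_right_eq_Icc, Finset.sum_Ico_eq_sum_range]
          refine Finset.sum_congr (by simp) fun j _ => ?_
          congr 1
          omega
      _ ≤ 2 := sum_geometric_two_le d
  exact ⟨h1, by rw [h1]; linarith, by rw [h1]; linarith⟩
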